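/- arXiv:2503.02740 — 2 statements merged into one kernel-verified Lean document; each statement's English description precedes it below -/
import Mathlib

section
/- Let A be a finite set of alternatives with |A| ≥ 2. There is no voting rule f on the universal domain 𝒰_A that satisfies false-name-proofness, participation, and neutrality. -/
/-! ## Basic framework: preferences, profiles, voting rules, axioms -/

/-- A preference is a strict linear order on the set `A` of alternatives, encoded as a
`LinearOrder` structure on `A`; alternative `x` is strictly preferred to `y` iff `y < x`
(i.e. "greater is better"). -/
abbrev Pref (A : Type*) := LinearOrder A

/-- Strict preference: `x` is strictly preferred to `y` under `p`. -/
def Pref.pref {A : Type*} (p : Pref A) (x y : A) : Prop := p.lt y x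

/-- Weak preference (the weak counterpart `R` of the strict preference `P`):
`x` is weakly preferred to `y` under `p`. -/
def Pref.wpref {A : Type*} (p : Pref A) (x y : A) : Prop := p.le y x

/-- The top (most preferred) alternative of a preference. -/
noncomputable def Pref.top {A : Type*} [Fintype A] [Nonempty A] (p : Pref A) : A :=
  @Finset.max' A p Finset.univ Finset.univ_nonempty

/-- The bottom (least preferred) alternative of a preference. -/
noncomputable def Pref.bot {A : Type*} [Fintype A] [Nonempty A] (p : Pref A) : A :=
  @Finset.min' A p Finset.univ Finset.univ_nonempty

/-- A profile over the society `N` (a finite set of voters, indexed by naturals):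
it assigns a preference to each member of `N`. -/
abbrev Profile (A : Type*) (N : Finset ℕ) := (i : ℕ) → i ∈ N → Pref A

/-- The profile `P` takes values in the domain `D` of preferences. -/
def Profile.inDomain {A : Type*} {N : Finset ℕ} (P : Profile A N) (D : Set (Pref A)) : Prop :=
  ∀ i (hi : i ∈ N), P i hi ∈ D

/-- A (variable-population) voting rule: it assigns an alternative to every society
together with a profile over it. -/
abbrev Rule (A : Type*) := (N : Finset ℕ) → Profile A N → A

/-- Ontoness on the domain `D`: for every society and every alternative, some
`D`-profile realizes that alternative. -/
def OntoOn {A : Type*} (D : Set (Pref A)) (f : Rule A) : Prop :=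
  ∀ N : Finset ℕ, N.Nonempty → ∀ a : A, ∃ P : Profile A N, P.inDomain D ∧ f N P = a

/-- Tops-onliness on the domain `D`: two `D`-profiles with the same tops get the
same outcome. -/
def TopsOnlyOn {A : Type*} [Fintype A] [Nonempty A] (D : Set (Pref A)) (f : Rule A) : Prop :=
  ∀ N : Finset ℕ, N.Nonempty → ∀ P P' : Profile A N, P.inDomain D → P'.inDomain D →
    (∀ i (hi : i ∈ N), (P i hi).top = (P' i hi).top) → f N P = f N P'

/-- False-name-proofness on the domain `D`: if a voter `i` of the society `N` casts,
under fresh identities `N'`, extra votes identical to her own preference, the outcome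
does not improve for her. -/
def FalseNameProofOn {A : Type*} (D : Set (Pref A)) (f : Rule A) : Prop :=
  ∀ N N' : Finset ℕ, N.Nonempty → N'.Nonempty → Disjoint N N' →
    ∀ P : Profile A (N ∪ N'), P.inDomain D →
      ∀ i (hi : i ∈ N),
        (∀ j (hj : j ∈ N'),
            P j (Finset.mem_union_right N hj) = P i (Finset.mem_union_left N' hi)) →
        (P i (Finset.mem_union_left N' hi)).wpref
          (f N (fun j hj => P j (Finset.mem_union_left N' hj)))
          (f (N ∪ N') P)

/-- Participation on the domain `D`: no voter gains by abstaining. -/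
def ParticipationOn {A : Type*} (D : Set (Pref A)) (f : Rule A) : Prop :=
  ∀ N : Finset ℕ, 2 ≤ N.card → ∀ P : Profile A N, P.inDomain D →
    ∀ i (hi : i ∈ N),
      (P i hi).wpref (f N P) (f (N.erase i) (fun j hj => P j (Finset.mem_of_mem_erase hj)))

lemma mem_of_mem_image_perm {σ : Equiv.Perm ℕ} {N : Finset ℕ} {j : ℕ}
    (hj : j ∈ N.image σ) : σ.symm j ∈ N := by
  obtain ⟨i, hi, rfl⟩ := Finset.mem_image.mp hj
  simpa using hi

/-- The permuted profile `σ(P_N)` over the society `σ(N)`: voter `σ i` gets the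
preference `P i`. -/
def permProfile {A : Type*} (σ : Equiv.Perm ℕ) {N : Finset ℕ} (P : Profile A N) :
    Profile A (N.image σ) :=
  fun j hj => P (σ.symm j) (mem_of_mem_image_perm hj)

/-- Anonymity on the domain `D`: permuting the voters' identities does not change
the outcome. -/
def AnonymousOn {A : Type*} (D : Set (Pref A)) (f : Rule A) : Prop :=
  ∀ (σ : Equiv.Perm ℕ) (N : Finset ℕ), N.Nonempty → ∀ P : Profile A N, P.inDomain D →
    f (N.image σ) (permProfile σ P) = f N P

/-- Relabeling a preference along a permutation `γ` of the alternatives: in the new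
preference, `γ x` is strictly preferred to `γ y` iff `x` was strictly preferred to `y`. -/
noncomputable def Pref.relabel {A : Type*} (p : Pref A) (γ : Equiv.Perm A) : Pref A :=
  @LinearOrder.lift' A A p γ.symm γ.symm.injective

/-- Neutrality on the domain `D`: relabeling the alternatives by a permutation `γ`
relabels the outcome accordingly. -/
def NeutralOn {A : Type*} (D : Set (Pref A)) (f : Rule A) : Prop :=
  ∀ (γ : Equiv.Perm A) (N : Finset ℕ), N.Nonempty → ∀ P : Profile A N, P.inDomain D →
    γ (f N P) = f N (fun i hi => (P i hi).relabel γ)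


/-! ## Auxiliary lemmas for statement 4 -/

section Aux

variable {A : Type*}

lemma rule_congr (f : Rule A) {N₁ N₂ : Finset ℕ} (h : N₁ = N₂) (P : Profile A N₁) :
    f N₁ P = f N₂ (fun i hi => P i (h ▸ hi)) := by subst h; rfl

lemma Pref.wpref_antisymm (p : Pref A) {x y : A} (h1 : p.wpref x y) (h2 : p.wpref y x) :
    x = y :=
  p.le_antisymm x y h2 h1

/-- Adding a single clone does not change the outcome. -/
lemma cloneStep (f : Rule A)
    (hfnp : FalseNameProofOn Set.univ f) (hpart : ParticipationOn Set.univ f)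
    {N : Finset ℕ} (hN : N.Nonempty) {j : ℕ} (hj : j ∉ N)
    (P : Profile A (N ∪ {j})) {i : ℕ} (hi : i ∈ N)
    (hcl : P j (Finset.mem_union_right N (Finset.mem_singleton_self j))
           = P i (Finset.mem_union_left {j} hi)) :
    f (N ∪ {j}) P = f N (fun k hk => P k (Finset.mem_union_left {j} hk)) := by
  have hdisj : Disjoint N ({j} : Finset ℕ) := by
    simpa [Finset.disjoint_singleton_right] using hj
  have h1 := hfnp N {j} hN ⟨j, Finset.mem_singleton_self j⟩ hdisj P
    (fun _ _ => Set.mem_univ _) i hi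
    (by intro k hk
        have : k = j := Finset.mem_singleton.mp hk
        subst this
        exact hcl)
  have hcard : 2 ≤ (N ∪ {j}).card := by
    have h' : (N ∪ {j}) = insert j N := by
      rw [Finset.union_comm]; exact (Finset.insert_eq j N).symm
    rw [h', Finset.card_insert_of_notMem hj]
    have := Finset.card_pos.mpr hN
    omega
  have h2 := hpart (N ∪ {j}) hcard P (fun _ _ => Set.mem_univ _) j
      (Finset.mem_union_right N (Finset.mem_singleton_self j))
  have herase : (N ∪ {j}).erase j = N := by
    rw [Finset.union_comm, ← Finset.insert_eq]
    exact Finset.erase_insert hj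
  rw [rule_congr f herase] at h2
  rw [hcl] at h2
  exact Pref.wpref_antisymm _ h2 h1

/-- Removing a whole set of clones does not change the outcome. -/
lemma removeClones (f : Rule A)
    (hfnp : FalseNameProofOn Set.univ f) (hpart : ParticipationOn Set.univ f)
    {N : Finset ℕ} (hN : N.Nonempty) (T : Finset ℕ) :
    Disjoint N T → ∀ R : Profile A (N ∪ T),
    (∀ t (ht : t ∈ T), ∃ (i : ℕ) (hi : i ∈ N),
        R t (Finset.mem_union_right N ht) = R i (Finset.mem_union_left T hi)) →
    f (N ∪ T) R = f N (fun i hi => R i (Finset.mem_union_left T hi)) := by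
  classical
  induction T using Finset.induction_on with
  | empty =>
      intro _ R _
      have h : N ∪ (∅ : Finset ℕ) = N := Finset.union_empty N
      rw [rule_congr f h]
  | @insert t S htS ih =>
      intro hdisj R hclone
      have htN : t ∉ N := fun h =>
        (Finset.disjoint_left.mp hdisj h) (Finset.mem_insert_self t S)
      have hdisjS : Disjoint N S :=
        hdisj.mono_right (Finset.subset_insert t S)
      have heq : N ∪ insert t S = (N ∪ S) ∪ {t} := by
        ext x; simp [Finset.mem_insert, Finset.mem_union]
      rw [rule_congr f heq]
      set R' : Profile A ((N ∪ S) ∪ {t}) := fun k hk => R k (heq ▸ hk) with hR'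
      have hNS : (N ∪ S).Nonempty := hN.mono Finset.subset_union_left
      have htNS : t ∉ N ∪ S := by
        simp only [Finset.mem_union]
        rintro (h | h)
        · exact htN h
        · exact htS h
      obtain ⟨i, hi, hcl⟩ := hclone t (Finset.mem_insert_self t S)
      have step := cloneStep f hfnp hpart hNS htNS R'
        (Finset.mem_union_left S hi) (by exact hcl)
      rw [step]
      have step2 := ih hdisjS (fun k hk => R' k (Finset.mem_union_left {t} hk))
        (by intro s hs
            obtain ⟨i, hi, h⟩ := hclone s (Finset.mem_insert_of_mem hs)
            exact ⟨i, hi, h⟩)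
      exact step2

/-- The outcome depends only on the set of preferences present in the profile. -/
lemma sameSet (f : Rule A)
    (hfnp : FalseNameProofOn Set.univ f) (hpart : ParticipationOn Set.univ f)
    {N M : Finset ℕ} (hN : N.Nonempty) (hM : M.Nonempty)
    (P : Profile A N) (Q : Profile A M)
    (h1 : ∀ i (hi : i ∈ N), ∃ (j : ℕ) (hj : j ∈ M), Q j hj = P i hi)
    (h2 : ∀ j (hj : j ∈ M), ∃ (i : ℕ) (hi : i ∈ N), P i hi = Q j hj) :
    f N P = f M Q := by
  classical
  set t : ℕ := (N ∪ M).sup id + 1 with ht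
  have hlt : ∀ k ∈ N ∪ M, k < t := by
    intro k hk
    have h := Finset.le_sup (f := id) hk
    simp only [id] at h
    omega
  set T : Finset ℕ := M.image (· + t) with hT
  have hmemT : ∀ k, k ∈ T → t ≤ k ∧ k - t ∈ M := by
    intro k hk
    obtain ⟨m, hm, rfl⟩ := Finset.mem_image.mp hk
    exact ⟨Nat.le_add_left t m, by simpa using hm⟩
  have hTN : Disjoint N T := by
    rw [Finset.disjoint_left]
    intro k hk hk'
    have := hlt k (Finset.mem_union_left M hk)
    have := (hmemT k hk').1
    omega
  have hTM : Disjoint M T := by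
    rw [Finset.disjoint_left]
    intro k hk hk'
    have := hlt k (Finset.mem_union_right N hk)
    have := (hmemT k hk').1
    omega
  have hTne : T.Nonempty := hM.image _
  -- profile on N ∪ T
  set R : Profile A (N ∪ T) := fun k hk =>
    if h : k ∈ N then P k h
    else Q (k - t) (by
      rcases Finset.mem_union.mp hk with h' | h'
      · exact absurd h' h
      · exact (hmemT k h').2) with hR
  -- profile on M ∪ T
  set S : Profile A (M ∪ T) := fun k hk =>
    if h : k ∈ M then Q k h
    else Q (k - t) (by
      rcases Finset.mem_union.mp hk with h' | h'
      · exact absurd h' h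
      · exact (hmemT k h').2) with hS
  have hRT : ∀ k (hk : k ∈ T), R k (Finset.mem_union_right N hk)
      = Q (k - t) (hmemT k hk).2 := by
    intro k hk
    have hkN : k ∉ N := Finset.disjoint_right.mp hTN hk
    simp only [hR, dif_neg hkN]
  have hST : ∀ k (hk : k ∈ T), S k (Finset.mem_union_right M hk)
      = Q (k - t) (hmemT k hk).2 := by
    intro k hk
    have hkM : k ∉ M := Finset.disjoint_right.mp hTM hk
    simp only [hS, dif_neg hkM]
  -- f N P = f (N ∪ T) R
  have e1 : f (N ∪ T) R = f N P := by
    have := removeClones f hfnp hpart hN T hTN R (by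
      intro k hk
      obtain ⟨i, hi, hPQ⟩ := h2 (k - t) (hmemT k hk).2
      refine ⟨i, hi, ?_⟩
      rw [hRT k hk]
      simp only [hR, dif_pos hi]
      exact hPQ.symm)
    rw [this]
    congr 1
    funext i hi
    simp only [hR, dif_pos hi]
  -- f (N ∪ T) R = f T (R|T)
  have e2 : f (N ∪ T) R = f T (fun k hk => R k (Finset.mem_union_right N hk)) := by
    have heq : N ∪ T = T ∪ N := Finset.union_comm N T
    rw [rule_congr f heq]
    exact removeClones f hfnp hpart hTne N hTN.symm (fun k hk => R k (heq ▸ hk)) (by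
      intro i hiN
      obtain ⟨j, hj, hQP⟩ := h1 i hiN
      have hjt : j + t ∈ T := Finset.mem_image.mpr ⟨j, hj, rfl⟩
      refine ⟨j + t, hjt, ?_⟩
      have h1' : j + t ∉ N := Finset.disjoint_right.mp hTN hjt
      have hv1 : R i (Finset.mem_union_left T hiN) = P i hiN := dif_pos hiN
      have hv2 : R (j + t) (Finset.mem_union_right N hjt) = Q j hj :=
        (dif_neg h1').trans (by (congr 1; omega))
      exact (hv1.trans hQP.symm).trans hv2.symm)
  -- f M Q = f (M ∪ T) S = f T (S|T)
  have e3 : f (M ∪ T) S = f M Q := by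
    have := removeClones f hfnp hpart hM T hTM S (by
      intro k hk
      have hk2 := (hmemT k hk).2
      refine ⟨k - t, hk2, ?_⟩
      rw [hST k hk]
      simp only [hS, dif_pos hk2])
    rw [this]
    congr 1
    funext j hj
    simp only [hS, dif_pos hj]
  have e4 : f (M ∪ T) S = f T (fun k hk => S k (Finset.mem_union_right M hk)) := by
    have heq : M ∪ T = T ∪ M := Finset.union_comm M T
    rw [rule_congr f heq]
    exact removeClones f hfnp hpart hTne M hTM.symm (fun k hk => S k (heq ▸ hk)) (by
      intro j hjM
      have hjt : j + t ∈ T := Finset.mem_image.mpr ⟨j, hjM, rfl⟩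
      refine ⟨j + t, hjt, ?_⟩
      have h1' : j + t ∉ M := Finset.disjoint_right.mp hTM hjt
      have hv1 : S j (Finset.mem_union_left T hjM) = Q j hjM := dif_pos hjM
      have hv2 : S (j + t) (Finset.mem_union_right M hjt) = Q j hjM :=
        (dif_neg h1').trans (by (congr 1; omega))
      exact hv1.trans hv2.symm)
  have e5 : (fun k hk => R k (Finset.mem_union_right N hk))
      = (fun k (hk : k ∈ T) => S k (Finset.mem_union_right M hk)) := by
    funext k hk
    rw [hRT k hk, hST k hk]
  rw [← e1, e2, e5, ← e4, e3]

lemma Pref.relabel_le (p : Pref A) (γ : Equiv.Perm A) (x y : A) :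
    (p.relabel γ).le x y ↔ p.le (γ.symm x) (γ.symm y) := Iff.rfl

lemma Pref.relabel_relabel (p : Pref A) (γ δ : Equiv.Perm A) :
    (p.relabel δ).relabel γ = p.relabel (γ * δ) := by
  apply LinearOrder.ext
  intro x y
  rfl

end Aux

/-- For a finite set of alternatives with at least two elements, no
voting rule on the universal domain satisfies false-name-proofness, participation and
neutrality. -/
theorem stmt_4 {A : Type*} [Fintype A] (hA : 2 ≤ Fintype.card A) :
    ¬ ∃ f : Rule A,
        FalseNameProofOn Set.univ f ∧ ParticipationOn Set.univ f ∧ NeutralOn Set.univ f := by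
  classical
  rintro ⟨f, hfnp, hpart, hneut⟩
  have hApos : 0 < Fintype.card A := by omega
  have : Nonempty A := Fintype.card_pos_iff.mp hApos
  -- a base linear order on A
  let p₀ : Pref A := LinearOrder.lift' (Fintype.equivFin A) (Equiv.injective _)
  set k : ℕ := Fintype.card (Equiv.Perm A) with hk
  have hkpos : 0 < k := Fintype.card_pos
  let e : Fin k ≃ Equiv.Perm A := (Fintype.equivFin (Equiv.Perm A)).symm
  set N : Finset ℕ := Finset.range k with hNdef
  have hN : N.Nonempty := ⟨0, Finset.mem_range.mpr hkpos⟩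
  let P : Profile A N := fun i hi => p₀.relabel (e ⟨i, Finset.mem_range.mp hi⟩)
  set x : A := f N P with hx
  have hfix : ∀ γ : Equiv.Perm A, γ x = x := by
    intro γ
    have hne := hneut γ N hN P (fun _ _ => Set.mem_univ _)
    have hsame : f N (fun i hi => (P i hi).relabel γ) = f N P := by
      apply sameSet f hfnp hpart hN hN
      · -- every pref of the relabeled profile appears in P
        intro j hj
        have hjfin : (⟨j, by rw [hNdef] at hj; exact Finset.mem_range.mp hj⟩ : Fin k)
            = ⟨j, by rw [hNdef] at hj; exact Finset.mem_range.mp hj⟩ := rfl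
        set jfin : Fin k := ⟨j, by rw [hNdef] at hj; exact Finset.mem_range.mp hj⟩
        set ifin : Fin k := e.symm (γ * e jfin) with hifin
        have hmem : ifin.val ∈ N := by rw [hNdef]; exact Finset.mem_range.mpr ifin.isLt
        refine ⟨ifin.val, hmem, ?_⟩
        have key : p₀.relabel (e ifin) = (p₀.relabel (e jfin)).relabel γ := by
          rw [Pref.relabel_relabel, hifin, Equiv.apply_symm_apply]
        exact key
      · -- every pref of P appears in the relabeled profile
        intro i hi
        set ifin : Fin k := ⟨i, by rw [hNdef] at hi; exact Finset.mem_range.mp hi⟩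
        set jfin : Fin k := e.symm (γ⁻¹ * e ifin) with hjfin
        have hmem : jfin.val ∈ N := by rw [hNdef]; exact Finset.mem_range.mpr jfin.isLt
        refine ⟨jfin.val, hmem, ?_⟩
        have key : (p₀.relabel (e jfin)).relabel γ = p₀.relabel (e ifin) := by
          rw [Pref.relabel_relabel, hjfin, Equiv.apply_symm_apply]
          congr 1
          group
        exact key
    rw [← hx] at hne
    rw [hne, hsame, ← hx]
  obtain ⟨y, hy⟩ := Fintype.exists_ne_of_one_lt_card (by omega) x
  have := hfix (Equiv.swap x y)
  rw [Equiv.swap_apply_left] at this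
  exact hy this
end

section
/- The rule f^> defined on the domain 𝒮 of separable preferences by: x ∈ f^>(P_N) iff |{T ∈ t(P_N) : x ∈ T}| > |t(P_N)|/2, where t(P_N) = {t(P_i) : i ∈ N} is the set of distinct top sets of the profile, satisfies ontoness, tops-onliness, false-name-proofness, participation, and object neutrality. -/
/-! ## The domain of preferences over subsets of a set `O` of objects -/

/-- Object neutrality: permuting the objects by `μ` (which permutes every subset of
objects pointwise) relabels the outcome accordingly. -/
def ObjectNeutralOn {O : Type*} [Fintype O] [DecidableEq O]
    (D : Set (Pref (Finset O))) (f : Rule (Finset O)) : Prop :=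
  ∀ (μ : Equiv.Perm O) (N : Finset ℕ), N.Nonempty →
    ∀ P : Profile (Finset O) N, P.inDomain D →
      (f N P).image μ = f N (fun i hi => (P i hi).relabel μ.finsetCongr)

/-- A preference over subsets of objects is separable if adding an object `x ∉ S` to a
set `S` improves the set exactly when `{x}` is preferred to `∅`. -/
def Separable {O : Type*} [Fintype O] [DecidableEq O] (p : Pref (Finset O)) : Prop :=
  ∀ (S : Finset O) (x : O), x ∉ S → (p.pref (insert x S) S ↔ p.pref {x} (∅ : Finset O))

/-- The domain of separable preferences over subsets of objects. -/
def SepDom (O : Type*) [Fintype O] [DecidableEq O] : Set (Pref (Finset O)) :=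
  {p | Separable p}

/-- `t(P_N)`: the set of distinct top sets of the profile `P`. -/
noncomputable def distinctTops {O : Type*} [Fintype O] [DecidableEq O] {N : Finset ℕ}
    (P : Profile (Finset O) N) : Finset (Finset O) :=
  N.attach.image fun i => (P i.1 i.2).top

/-- The rule `f^>`: an object is chosen iff it belongs to strictly more than half of the
distinct top sets of the profile. -/
noncomputable def fGt (O : Type*) [Fintype O] [DecidableEq O] : Rule (Finset O) :=
  fun N P =>
    Finset.univ.filter fun x =>
      (distinctTops P).card < 2 * ((distinctTops P).filter fun T => x ∈ T).card

/-- The rule `f^≥`: an object is chosen iff it belongs to at least half of the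
distinct top sets of the profile. -/
noncomputable def fGe (O : Type*) [Fintype O] [DecidableEq O] : Rule (Finset O) :=
  fun N P =>
    Finset.univ.filter fun x =>
      (distinctTops P).card ≤ 2 * ((distinctTops P).filter fun T => x ∈ T).card

/-- `g` is the tops-only extension to the domain `Dbig` (⊇ separable preferences) of the
tops-only rule `f` defined on the separable domain: on every `Dbig`-profile `P`, `g`
agrees with the value of `f` at any separable profile `Q` having the same tops as `P`. -/
def IsTopsOnlyExtensionOn {O : Type*} [Fintype O] [DecidableEq O]
    (Dbig : Set (Pref (Finset O))) (f g : Rule (Finset O)) : Prop :=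
  ∀ N : Finset ℕ, N.Nonempty →
    ∀ P : Profile (Finset O) N, P.inDomain Dbig →
      ∀ Q : Profile (Finset O) N, Q.inDomain (SepDom O) →
        (∀ i (hi : i ∈ N), (P i hi).top = (Q i hi).top) → g N P = f N Q


/-! ## Auxiliary lemmas -/

set_option linter.unusedSectionVars false

section basicPref
variable {A : Type*} [Fintype A] [Nonempty A]

lemma Pref.le_top (p : Pref A) (a : A) : p.le a p.top :=
  @Finset.le_max' A p Finset.univ a (Finset.mem_univ a)

lemma Pref.top_eq (p : Pref A) {a : A} (h : ∀ b, p.le b a) : p.top = a :=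
  p.le_antisymm _ _ (h p.top) (p.le_top a)

lemma Pref.lt_of_le_ne (p : Pref A) {a b : A} (hle : p.le a b) (hne : a ≠ b) : p.lt a b :=
  (p.lt_iff_le_not_ge a b).mpr ⟨hle, fun h => hne (p.le_antisymm _ _ hle h)⟩

lemma Pref.not_le_of_lt (p : Pref A) {a b : A} (h : p.lt a b) : ¬ p.le b a :=
  fun hle => absurd hle ((p.lt_iff_le_not_ge a b).mp h).2

lemma Pref.lt_top (p : Pref A) {a : A} (h : a ≠ p.top) : p.lt a p.top :=
  p.lt_of_le_ne (p.le_top a) h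

lemma Pref.le_of_lt' (p : Pref A) {a b : A} (h : p.lt a b) : p.le a b :=
  ((p.lt_iff_le_not_ge a b).mp h).1

lemma Pref.total_lt (p : Pref A) {a b : A} (h : ¬ p.lt a b) (hne : b ≠ a) : p.lt b a := by
  rcases p.le_total a b with hle | hle
  · exact absurd (p.lt_of_le_ne hle (fun he => hne he.symm)) h
  · exact p.lt_of_le_ne hle hne

lemma Pref.relabel_top (p : Pref A) (γ : Equiv.Perm A) :
    (p.relabel γ).top = γ p.top := by
  apply Pref.top_eq
  intro b
  show p.le (γ.symm b) (γ.symm (γ p.top))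
  rw [Equiv.symm_apply_apply]
  exact p.le_top _
end basicPref

section sepLemmas
variable {O : Type*} [Fintype O] [DecidableEq O]

lemma mem_top_iff {p : Pref (Finset O)} (hp : Separable p) (x : O) :
    x ∈ p.top ↔ p.pref {x} (∅ : Finset O) := by
  constructor
  · intro hx
    have h1 : x ∉ p.top.erase x := Finset.notMem_erase x _
    have h2 := hp (p.top.erase x) x h1
    rw [Finset.insert_erase hx] at h2
    exact h2.mp (p.lt_top (fun he => (Finset.notMem_erase x p.top) (by rw [he]; exact hx)))
  · intro hx
    by_contra hxt
    have h2 := (hp p.top x hxt).mpr hx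
    exact p.not_le_of_lt h2 (p.le_top _)

lemma sep_add_lt {p : Pref (Finset O)} (hp : Separable p) {S : Finset O} {x : O}
    (hx : x ∈ p.top) (hxS : x ∉ S) : p.lt S (insert x S) :=
  (hp S x hxS).mpr ((mem_top_iff hp x).mp hx)

lemma sep_erase_lt {p : Pref (Finset O)} (hp : Separable p) {S : Finset O} {x : O}
    (hx : x ∉ p.top) (hxS : x ∈ S) : p.lt S (S.erase x) := by
  have h1 : x ∉ S.erase x := Finset.notMem_erase x S
  have h2 := hp (S.erase x) x h1
  rw [Finset.insert_erase hxS] at h2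
  have hnotlt : ¬ p.lt S (S.erase x) → p.lt (S.erase x) S := by
    intro h; exact p.total_lt h (fun he => (Finset.notMem_erase x S) (by rw [he]; exact hxS))
  by_contra hcon
  have := hnotlt hcon
  have h3 : p.pref {x} (∅ : Finset O) := h2.mp this
  exact hx ((mem_top_iff hp x).mpr h3)

/-- Improvement lemma: enlarging the intersection with the top and shrinking the part
outside the top weakly improves a set. -/
lemma sep_le_of {p : Pref (Finset O)} (hp : Separable p) :
    ∀ n (S T : Finset O), ((T \ S) ∪ (S \ T)).card = n →
      S ∩ p.top ⊆ T ∩ p.top → T \ p.top ⊆ S \ p.top → p.le S T := by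
  intro n
  induction n using Nat.strong_induction_on with
  | _ n IH =>
    intro S T hcard h1 h2
    rcases (T \ S).eq_empty_or_nonempty with hTS | ⟨x, hx⟩
    · rcases (S \ T).eq_empty_or_nonempty with hST | ⟨x, hx⟩
      · have : S = T := Finset.Subset.antisymm
          (fun y hy => by
            by_contra hyT; exact absurd (Finset.mem_sdiff.mpr ⟨hy, hyT⟩) (by simp [hST]))
          (fun y hy => by
            by_contra hyS; exact absurd (Finset.mem_sdiff.mpr ⟨hy, hyS⟩) (by simp [hTS]))
        exact this ▸ p.le_refl S
      · obtain ⟨hxS, hxT⟩ := Finset.mem_sdiff.mp hx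
        have hxtop : x ∉ p.top := by
          intro hxt
          exact hxT (Finset.mem_of_mem_inter_left (h1 (Finset.mem_inter.mpr ⟨hxS, hxt⟩)))
        have hstep := sep_erase_lt hp hxtop hxS
        have hm : ((T \ S.erase x) ∪ (S.erase x \ T)).card < n := by
          have e1 : T \ S.erase x = T \ S := by
            ext y; simp only [Finset.mem_sdiff, Finset.mem_erase]
            constructor
            · rintro ⟨hyT, hy⟩
              exact ⟨hyT, fun hyS => hy ⟨fun he => hxT (he ▸ hyT), hyS⟩⟩
            · rintro ⟨hyT, hyS⟩; exact ⟨hyT, fun h => hyS h.2⟩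
          have e2 : S.erase x \ T = (S \ T).erase x := by
            ext y; simp only [Finset.mem_sdiff, Finset.mem_erase]; tauto
          rw [e1, e2, ← hcard]
          apply Finset.card_lt_card
          constructor
          · intro y hy
            rcases Finset.mem_union.mp hy with h | h
            · exact Finset.mem_union_left _ h
            · exact Finset.mem_union_right _ (Finset.mem_of_mem_erase h)
          · intro hsub
            have := hsub (Finset.mem_union_right _ hx)
            rcases Finset.mem_union.mp this with h | h
            · exact hxT (Finset.mem_sdiff.mp h).1
            · exact (Finset.notMem_erase x _) h
        have hrec := IH _ hm (S.erase x) T rfl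
          (fun y hy => by
            obtain ⟨hy1, hy2⟩ := Finset.mem_inter.mp hy
            exact h1 (Finset.mem_inter.mpr ⟨Finset.mem_of_mem_erase hy1, hy2⟩))
          (fun y hy => by
            obtain ⟨hy1, hy2⟩ := Finset.mem_sdiff.mp hy
            have := h2 (Finset.mem_sdiff.mpr ⟨hy1, hy2⟩)
            obtain ⟨hyS, _⟩ := Finset.mem_sdiff.mp this
            exact Finset.mem_sdiff.mpr ⟨Finset.mem_erase.mpr ⟨fun he => hxT (he ▸ hy1), hyS⟩, hy2⟩)
        exact p.le_trans _ _ _ (p.le_of_lt' hstep) hrec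
    · obtain ⟨hxT, hxS⟩ := Finset.mem_sdiff.mp hx
      have hxtop : x ∈ p.top := by
        by_contra hxt
        exact hxS (Finset.mem_sdiff.mp (h2 (Finset.mem_sdiff.mpr ⟨hxT, hxt⟩))).1
      have hstep := sep_add_lt hp hxtop hxS
      have hm : ((T \ insert x S) ∪ (insert x S \ T)).card < n := by
        have e1 : T \ insert x S = (T \ S).erase x := by
          ext y; simp only [Finset.mem_sdiff, Finset.mem_erase, Finset.mem_insert]; tauto
        have e2 : insert x S \ T = S \ T := by
          ext y; simp only [Finset.mem_sdiff, Finset.mem_insert]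
          constructor
          · rintro ⟨h | h, hyT⟩
            · exact absurd hxT (h ▸ hyT)
            · exact ⟨h, hyT⟩
          · rintro ⟨hyS, hyT⟩; exact ⟨Or.inr hyS, hyT⟩
        rw [e1, e2, ← hcard]
        apply Finset.card_lt_card
        constructor
        · intro y hy
          rcases Finset.mem_union.mp hy with h | h
          · exact Finset.mem_union_left _ (Finset.mem_of_mem_erase h)
          · exact Finset.mem_union_right _ h
        · intro hsub
          have := hsub (Finset.mem_union_left _ hx)
          rcases Finset.mem_union.mp this with h | h
          · exact (Finset.notMem_erase x _) h
          · exact hxS (Finset.mem_sdiff.mp h).1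
      have hrec := IH _ hm (insert x S) T rfl
        (fun y hy => by
          obtain ⟨hy1, hy2⟩ := Finset.mem_inter.mp hy
          rcases Finset.mem_insert.mp hy1 with h | h
          · exact Finset.mem_inter.mpr ⟨h ▸ hxT, hy2⟩
          · exact h1 (Finset.mem_inter.mpr ⟨h, hy2⟩))
        (fun y hy => by
          obtain ⟨hy1, hy2⟩ := Finset.mem_sdiff.mp hy
          have := h2 (Finset.mem_sdiff.mpr ⟨hy1, hy2⟩)
          obtain ⟨hyS, _⟩ := Finset.mem_sdiff.mp this
          exact Finset.mem_sdiff.mpr ⟨Finset.mem_insert_of_mem hyS, hy2⟩)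
      exact p.le_trans _ _ _ (p.le_of_lt' hstep) hrec

/-! ### A canonical separable preference with a prescribed top -/

noncomputable def wgt (a : Finset O) (x : O) : ℤ :=
  if x ∈ a then (2 : ℤ) ^ ((Fintype.equivFin O x : ℕ)) else -((2 : ℤ) ^ ((Fintype.equivFin O x : ℕ)))

noncomputable def gwt (a : Finset O) (S : Finset O) : ℤ := ∑ x ∈ S, wgt a x

noncomputable def encF (S : Finset O) : ℕ := (Fintype.equivFin (Finset O) S : ℕ)

noncomputable def keyF (a : Finset O) (S : Finset O) : ℤ ×ₗ ℕ := toLex (gwt a S, encF S)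

lemma keyF_inj (a : Finset O) : Function.Injective (keyF a) := by
  intro S T h
  have h2 : encF S = encF T := congrArg (fun z => (ofLex z).2) h
  exact (Fintype.equivFin (Finset O)).injective (Fin.val_injective h2)

noncomputable def sepPref (a : Finset O) : Pref (Finset O) :=
  LinearOrder.lift' (keyF a) (keyF_inj a)

lemma sepPref_lt_iff (a S T : Finset O) :
    (sepPref a).lt S T ↔ (gwt a S < gwt a T ∨ (gwt a S = gwt a T ∧ encF S < encF T)) :=
  Prod.Lex.lt_iff (x := keyF a S) (y := keyF a T)

lemma two_pow_pos (x : O) : (0:ℤ) < 2 ^ ((Fintype.equivFin O x : ℕ)) := by positivity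

lemma wgt_ne_zero (a : Finset O) (x : O) : wgt a x ≠ 0 := by
  unfold wgt
  split
  · intro h; have := two_pow_pos (O := O) x; omega
  · intro h; have := two_pow_pos (O := O) x; omega

lemma gwt_insert {a S : Finset O} {x : O} (hx : x ∉ S) :
    gwt a (insert x S) = wgt a x + gwt a S := Finset.sum_insert hx

lemma sepPref_separable (a : Finset O) : Separable (sepPref a) := by
  intro S x hx
  have key : ∀ U V : Finset O, gwt a V = wgt a x + gwt a U →
      ((sepPref a).lt U V ↔ 0 < wgt a x) := by
    intro U V hUV
    rw [sepPref_lt_iff]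
    have hne := wgt_ne_zero a x
    constructor
    · rintro (h | ⟨h, -⟩) <;> omega
    · intro h; left; omega
  show (sepPref a).lt S (insert x S) ↔ (sepPref a).lt ∅ {x}
  rw [key S (insert x S) (gwt_insert hx),
      key ∅ {x} (by simp [gwt, Finset.sum_singleton])]

lemma gwt_lt_top (a : Finset O) {S : Finset O} (h : S ≠ a) : gwt a S < gwt a a := by
  have ha : gwt a a = ∑ x ∈ a, (2:ℤ) ^ ((Fintype.equivFin O x : ℕ)) :=
    Finset.sum_congr rfl (fun x hx => by simp [wgt, hx])
  have hsplit : gwt a S = ∑ x ∈ S ∩ a, wgt a x + ∑ x ∈ S \ a, wgt a x :=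
    (Finset.sum_inter_add_sum_sdiff S a (wgt a)).symm
  have hpos : ∑ x ∈ S ∩ a, wgt a x = ∑ x ∈ S ∩ a, (2:ℤ) ^ ((Fintype.equivFin O x : ℕ)) :=
    Finset.sum_congr rfl (fun x hx => by simp [wgt, (Finset.mem_inter.mp hx).2])
  have hle : ∑ x ∈ S ∩ a, (2:ℤ) ^ ((Fintype.equivFin O x : ℕ)) ≤ gwt a a := by
    rw [ha]
    apply Finset.sum_le_sum_of_subset_of_nonneg Finset.inter_subset_right
    intro x _ _
    exact le_of_lt (two_pow_pos x)
  rcases (S \ a).eq_empty_or_nonempty with hSd | hSd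
  · have hsub : S ⊆ a := by
      intro y hy
      by_contra hya
      exact absurd (Finset.mem_sdiff.mpr ⟨hy, hya⟩) (by simp [hSd])
    have hss : S ⊂ a := hsub.ssubset_of_ne h
    obtain ⟨x, hxa, hxS⟩ := Finset.exists_of_ssubset hss
    have e1 : gwt a S = ∑ x ∈ S, (2:ℤ) ^ ((Fintype.equivFin O x : ℕ)) :=
      Finset.sum_congr rfl (fun y hy => by simp [wgt, hsub hy])
    rw [e1, ha]
    exact Finset.sum_lt_sum_of_subset hsub hxa hxS (two_pow_pos x)
      (fun j _ _ => le_of_lt (two_pow_pos j))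
  · have hneg : ∑ x ∈ S \ a, wgt a x < 0 := by
      have hterm : ∀ x ∈ S \ a, wgt a x < 0 := by
        intro x hx
        have hxa := (Finset.mem_sdiff.mp hx).2
        have := two_pow_pos (O := O) x
        simp only [wgt, if_neg hxa]
        omega
      calc ∑ x ∈ S \ a, wgt a x < ∑ x ∈ S \ a, (0:ℤ) :=
            Finset.sum_lt_sum_of_nonempty hSd hterm
        _ = 0 := Finset.sum_const_zero
    calc gwt a S < ∑ x ∈ S ∩ a, wgt a x := by omega
      _ = _ := hpos
      _ ≤ gwt a a := hle

lemma sepPref_top (a : Finset O) : (sepPref a).top = a := by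
  apply Pref.top_eq
  intro S
  by_cases h : S = a
  · rw [h]; exact (sepPref a).le_refl a
  · exact (sepPref a).le_of_lt' ((sepPref_lt_iff a S a).mpr (Or.inl (gwt_lt_top a h)))

/-! ### Lemmas about `distinctTops` and `fGt` -/

lemma mem_distinctTops {N : Finset ℕ} (P : Profile (Finset O) N) (T : Finset O) :
    T ∈ distinctTops P ↔ ∃ i, ∃ hi : i ∈ N, (P i hi).top = T := by
  unfold distinctTops
  rw [Finset.mem_image]
  constructor
  · rintro ⟨⟨i, hi⟩, -, rfl⟩; exact ⟨i, hi, rfl⟩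
  · rintro ⟨i, hi, rfl⟩; exact ⟨⟨i, hi⟩, Finset.mem_attach _ _, rfl⟩

lemma fGt_congr {N M : Finset ℕ} (P : Profile (Finset O) N) (Q : Profile (Finset O) M)
    (h : distinctTops P = distinctTops Q) : fGt O N P = fGt O M Q := by
  unfold fGt
  rw [h]

lemma mem_fGt {N : Finset ℕ} (P : Profile (Finset O) N) (x : O) :
    x ∈ fGt O N P ↔
      (distinctTops P).card < 2 * ((distinctTops P).filter fun T => x ∈ T).card := by
  unfold fGt
  simp only [Finset.mem_filter, Finset.mem_univ, true_and]

end sepLemmas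

/-- On the domain of separable preferences, the rule `f^>` (an object is
chosen iff it belongs to strictly more than half of the distinct top sets of the profile)
satisfies ontoness, tops-onliness, false-name-proofness, participation and object
neutrality. -/
theorem stmt_6 {O : Type*} [Fintype O] [DecidableEq O] (hO : 2 ≤ Fintype.card O) :
    OntoOn (SepDom O) (fGt O) ∧ TopsOnlyOn (SepDom O) (fGt O) ∧
    FalseNameProofOn (SepDom O) (fGt O) ∧ ParticipationOn (SepDom O) (fGt O) ∧
    ObjectNeutralOn (SepDom O) (fGt O) := by
  clear hO
  refine ⟨?_, ?_, ?_, ?_, ?_⟩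
  · -- Ontoness
    intro N hN a
    refine ⟨fun _ _ => sepPref a, fun i hi => sepPref_separable a, ?_⟩
    have hD : distinctTops (fun (i : ℕ) (_ : i ∈ N) => sepPref a) = {a} := by
      unfold distinctTops
      rw [Finset.image_const hN.attach, sepPref_top]
    ext x
    rw [mem_fGt, hD]
    simp only [Finset.filter_singleton, Finset.card_singleton]
    by_cases hx : x ∈ a <;> simp [hx]
  · -- Tops-onliness
    intro N hN P P' hP hP' htops
    apply fGt_congr
    unfold distinctTops
    exact Finset.image_congr (fun i _ => htops i.1 i.2)
  · -- False-name-proofness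
    intro N N' hN hN' hdisj P hdom i hi hdup
    have hD : distinctTops P =
        distinctTops (fun j (hj : j ∈ N) => P j (Finset.mem_union_left N' hj)) := by
      ext T
      rw [mem_distinctTops, mem_distinctTops]
      constructor
      · rintro ⟨j, hj, rfl⟩
        rcases Finset.mem_union.mp hj with h | h
        · exact ⟨j, h, rfl⟩
        · exact ⟨i, hi, (congrArg Pref.top (hdup j h)).symm⟩
      · rintro ⟨j, hj, rfl⟩
        exact ⟨j, Finset.mem_union_left _ hj, rfl⟩
    show (P i (Finset.mem_union_left N' hi)).le (fGt O (N ∪ N') P) _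
    rw [fGt_congr P _ hD]
    exact (P i (Finset.mem_union_left N' hi)).le_refl _
  · -- Participation
    intro N hcard P hdom i hi
    set p := P i hi with hp_def
    have hp : Separable p := hdom i hi
    set Q : Profile (Finset O) (N.erase i) :=
      fun j hj => P j (Finset.mem_of_mem_erase hj) with hQ_def
    by_cases hA : ∃ j, ∃ hj : j ∈ N.erase i, (Q j hj).top = p.top
    · -- some other voter has the same top: outcome unchanged
      have hD : distinctTops P = distinctTops Q := by
        ext T
        rw [mem_distinctTops, mem_distinctTops]
        constructor
        · rintro ⟨j, hj, rfl⟩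
          by_cases hji : j = i
          · subst hji
            obtain ⟨k, hk, hkt⟩ := hA
            exact ⟨k, hk, hkt⟩
          · exact ⟨j, Finset.mem_erase.mpr ⟨hji, hj⟩, rfl⟩
        · rintro ⟨j, hj, rfl⟩
          exact ⟨j, Finset.mem_of_mem_erase hj, rfl⟩
      show p.le (fGt O (N.erase i) Q) (fGt O N P)
      rw [fGt_congr P Q hD]
      exact p.le_refl _
    · -- voter i's top is unique in the profile
      push_neg at hA
      set t := p.top with ht_def
      have hD' : distinctTops Q = (distinctTops P).erase t := by
        ext T
        rw [mem_distinctTops, Finset.mem_erase, mem_distinctTops]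
        constructor
        · rintro ⟨j, hj, rfl⟩
          exact ⟨hA j hj, j, Finset.mem_of_mem_erase hj, rfl⟩
        · rintro ⟨hne, j, hj, rfl⟩
          have hji : j ≠ i := by
            intro h
            subst h
            exact hne rfl
          exact ⟨j, Finset.mem_erase.mpr ⟨hji, hj⟩, rfl⟩
      have htD : t ∈ distinctTops P := (mem_distinctTops P t).mpr ⟨i, hi, rfl⟩
      have htD' : t ∉ distinctTops Q := by rw [hD']; exact Finset.notMem_erase t _
      have hDD : distinctTops P = insert t (distinctTops Q) := by
        rw [hD', Finset.insert_erase htD]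
      have hcardD : (distinctTops P).card = (distinctTops Q).card + 1 := by
        rw [hDD, Finset.card_insert_of_notMem htD']
      have hfilt : ∀ x : O, ((distinctTops P).filter fun T => x ∈ T).card =
          ((distinctTops Q).filter fun T => x ∈ T).card + (if x ∈ t then 1 else 0) := by
        intro x
        rw [hDD, Finset.filter_insert]
        split <;> rename_i hxt
        · exact Finset.card_insert_of_notMem
            (fun hc => htD' (Finset.mem_of_mem_filter t hc))
        · exact (add_zero _).symm
      have hmemW : ∀ x : O, x ∈ fGt O N P ↔
          (distinctTops Q).card + 1 <
            2 * (((distinctTops Q).filter fun T => x ∈ T).card + (if x ∈ t then 1 else 0)) := by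
        intro x
        rw [mem_fGt, hcardD, hfilt]
      have hmemE : ∀ x : O, x ∈ fGt O (N.erase i) Q ↔
          (distinctTops Q).card < 2 * ((distinctTops Q).filter fun T => x ∈ T).card :=
        fun x => mem_fGt Q x
      show p.le (fGt O (N.erase i) Q) (fGt O N P)
      apply sep_le_of hp _ _ _ rfl
      · intro y hy
        obtain ⟨hy1, hy2⟩ := Finset.mem_inter.mp hy
        have hy2' : y ∈ t := hy2
        refine Finset.mem_inter.mpr ⟨?_, hy2⟩
        rw [hmemW, if_pos hy2']
        rw [hmemE] at hy1
        omega
      · intro y hy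
        obtain ⟨hy1, hy2⟩ := Finset.mem_sdiff.mp hy
        have hy2' : y ∉ t := hy2
        refine Finset.mem_sdiff.mpr ⟨?_, hy2⟩
        rw [hmemE]
        rw [hmemW, if_neg hy2'] at hy1
        omega
  · -- Object neutrality
    intro μ N hN P hdom
    set γ := μ.finsetCongr with hγ_def
    have hDrel : distinctTops (fun i (hi : i ∈ N) => (P i hi).relabel γ) =
        (distinctTops P).image γ := by
      unfold distinctTops
      rw [Finset.image_image]
      exact Finset.image_congr (fun i _ => Pref.relabel_top (P i.1 i.2) γ)
    have himg : ∀ (S : Finset O) (x : O), x ∈ S.image μ ↔ μ.symm x ∈ S := by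
      intro S x
      rw [Finset.mem_image]
      constructor
      · rintro ⟨y, hy, rfl⟩; simpa using hy
      · intro h; exact ⟨μ.symm x, h, by simp⟩
    have hmemγ : ∀ (T : Finset O) (x : O), x ∈ γ T ↔ μ.symm x ∈ T := by
      intro T x
      rw [hγ_def, Equiv.finsetCongr_apply, Finset.mem_map_equiv]
    ext x
    rw [himg, mem_fGt, mem_fGt, hDrel,
        Finset.card_image_of_injective _ γ.injective]
    have hfe : ((distinctTops P).image γ).filter (fun T => x ∈ T) =
        ((distinctTops P).filter fun T => μ.symm x ∈ T).image γ := by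
      ext U
      simp only [Finset.mem_filter, Finset.mem_image]
      constructor
      · rintro ⟨⟨V, hV, rfl⟩, hx⟩
        exact ⟨V, ⟨hV, (hmemγ V x).mp hx⟩, rfl⟩
      · rintro ⟨V, ⟨hV, hx⟩, rfl⟩
        exact ⟨⟨V, hV, rfl⟩, (hmemγ V x).mpr hx⟩
    rw [hfe, Finset.card_image_of_injective _ γ.injective]
end
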